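/- Swapping two adjacent send events of distinct sending processes in a word preserves the channel-compliance property. -/

import Mathlib

/-- Events: `snd P Q m` is process `P` sending message `m` to `Q`;
    `rcv P Q m` is process `Q` receiving message `m` from `P`. -/
inductive Ev where
  | snd : ℕ → ℕ → ℕ → Ev
  | rcv : ℕ → ℕ → ℕ → Ev
deriving DecidableEq

/-- Message values of send events on channel (P,Q) in w. -/
def sends (w : List Ev) (P Q : ℕ) : List ℕ :=
  w.filterMap fun e => match e with
    | .snd p q m => if p = P ∧ q = Q then some m else none
    | _ => none

/-- Message values of receive events on channel (P,Q) in w. -/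
def recvs (w : List Ev) (P Q : ℕ) : List ℕ :=
  w.filterMap fun e => match e with
    | .rcv p q m => if p = P ∧ q = Q then some m else none
    | _ => none

def channelCompliant (w : List Ev) : Prop :=
  ∀ u, u <+: w → ∀ P Q, recvs u P Q <+: sends u P Q

def complete (w : List Ev) : Prop :=
  ∀ P Q, sends w P Q = recvs w P Q

def bounded (B : ℕ) (w : List Ev) : Prop :=
  ∀ u, u <+: w → ∀ P Q, (sends u P Q).length ≤ (recvs u P Q).length + B

def halfDuplex (w : List Ev) : Prop :=
  ∀ u, u <+: w → ∀ P Q,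
    sends u P Q = recvs u P Q ∨ sends u Q P = recvs u Q P

/-- Send at position i on channel (P,Q) is matched by receive at position j. -/
def Matches (w : List Ev) (P Q i j : ℕ) : Prop :=
  i < j ∧ j < w.length ∧
  (∃ m, w[i]? = some (.snd P Q m) ∧ w[j]? = some (.rcv P Q m)) ∧
  sends (w.take (i+1)) P Q = recvs (w.take (j+1)) P Q

def IsSendAt (w : List Ev) (P Q i : ℕ) : Prop := ∃ m, w[i]? = some (Ev.snd P Q m)
def IsRcvAt (w : List Ev) (P Q i : ℕ) : Prop := ∃ m, w[i]? = some (Ev.rcv P Q m)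
def MatchedAt (w : List Ev) (P Q i : ℕ) : Prop := ∃ j, Matches w P Q i j

/-- The process performing the event. -/
def actor : Ev → ℕ
  | .snd p _ _ => p
  | .rcv _ q _ => q

/-- Projection of a word onto the events of process X. -/
def proj (w : List Ev) (X : ℕ) : List Ev := w.filter (fun e => actor e == X)

/-- Two words induce the same MSC (same per-process orders; with FIFO matching,
    this determines the matching). -/
def sameMSC (w v : List Ev) : Prop := ∀ X, proj w X = proj v X

/-- Existentially B-bounded: some linearisation of msc(w) is B-bounded. -/
def existBounded (B : ℕ) (w : List Ev) : Prop :=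
  ∃ v, channelCompliant v ∧ sameMSC w v ∧ bounded B v

def isSnd : Ev → Prop
  | .snd _ _ _ => True
  | _ => False

def isRcv : Ev → Prop
  | .rcv _ _ _ => True
  | _ => False

/-- Positions i and j lie in the same block of the block decomposition. -/
def SameBlock (blocks : List (List Ev)) (i j : ℕ) : Prop :=
  ∃ t, ((blocks.take t).flatten).length ≤ i ∧ j < ((blocks.take (t+1)).flatten).length

/-- w is k-synchronisable: some linearisation of msc(w) splits into blocks of
    at most k sends followed by at most k receives, with matched pairs co-located. -/
def kSynchronisable (k : ℕ) (w : List Ev) : Prop :=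
  ∃ blocks : List (List Ev),
    channelCompliant blocks.flatten ∧ sameMSC w blocks.flatten ∧
    (∀ b ∈ blocks, ∃ s r, b = s ++ r ∧ s.length ≤ k ∧ r.length ≤ k ∧
      (∀ e ∈ s, isSnd e) ∧ (∀ e ∈ r, isRcv e)) ∧
    (∀ P Q i j, Matches blocks.flatten P Q i j → SameBlock blocks i j)

/-- One step of the indistinguishability relation ∼. -/
inductive Sim1 : List Ev → List Ev → Prop
  | ss (u v : List Ev) (P Q R S m m' : ℕ) (h : P ≠ R) :
      Sim1 (u ++ Ev.snd P Q m :: Ev.snd R S m' :: v)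
           (u ++ Ev.snd R S m' :: Ev.snd P Q m :: v)
  | rr (u v : List Ev) (P Q R S m m' : ℕ) (h : Q ≠ S) :
      Sim1 (u ++ Ev.rcv P Q m :: Ev.rcv R S m' :: v)
           (u ++ Ev.rcv R S m' :: Ev.rcv P Q m :: v)
  | sr (u v : List Ev) (P Q R S m m' : ℕ) (h1 : P ≠ S) (h2 : P ≠ R ∨ Q ≠ S) :
      Sim1 (u ++ Ev.snd P Q m :: Ev.rcv R S m' :: v)
           (u ++ Ev.rcv R S m' :: Ev.snd P Q m :: v)
  | srSame (u v : List Ev) (P Q m m' : ℕ)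
      (h : (recvs u P Q).length < (sends u P Q).length) :
      Sim1 (u ++ Ev.snd P Q m :: Ev.rcv P Q m' :: v)
           (u ++ Ev.rcv P Q m' :: Ev.snd P Q m :: v)

/-- The indistinguishability relation ∼ (finitely many swaps). -/
def Sim : List Ev → List Ev → Prop := Relation.ReflTransGen Sim1

lemma sends_append (a b : List Ev) (P Q : ℕ) :
    sends (a ++ b) P Q = sends a P Q ++ sends b P Q := by
  simp [sends]

lemma recvs_append (a b : List Ev) (P Q : ℕ) :
    recvs (a ++ b) P Q = recvs a P Q ++ recvs b P Q := by
  simp [recvs]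

lemma recvs_snd_cons (p q n : ℕ) (t : List Ev) (P Q : ℕ) :
    recvs (Ev.snd p q n :: t) P Q = recvs t P Q := by
  simp [recvs]

lemma sends_snd_cons (p q n : ℕ) (t : List Ev) (P Q : ℕ) :
    sends (Ev.snd p q n :: t) P Q =
      (if p = P ∧ q = Q then [n] else []) ++ sends t P Q := by
  by_cases h : p = P ∧ q = Q <;> simp [sends, h]


/-- swapping two adjacent sends of distinct sending processes
    preserves channel-compliance. -/
theorem swap_sends_preserves_channelCompliant
    (u v : List Ev) (P Q R S m m' : ℕ) (hPR : P ≠ R)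
    (h : channelCompliant (u ++ Ev.snd P Q m :: Ev.snd R S m' :: v)) :
    channelCompliant (u ++ Ev.snd R S m' :: Ev.snd P Q m :: v) := by
  intro w hw X Y
  obtain ⟨n, rfl⟩ : ∃ n, w = (u ++ Ev.snd R S m' :: Ev.snd P Q m :: v).take n := by
    obtain ⟨t, ht⟩ := hw
    exact ⟨w.length, by rw [← ht]; simp⟩
  rcases le_or_gt n u.length with hn | hn
  · -- prefix of u
    rw [List.take_append_of_le_length hn]
    exact h _ ((u.take_prefix n).trans (u.prefix_append _)) X Y
  rcases eq_or_lt_of_le (show u.length + 1 ≤ n from hn) with hn1 | hn1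
  · -- w = u ++ [snd R S m']
    have heq : (u ++ Ev.snd R S m' :: Ev.snd P Q m :: v).take n = u ++ [Ev.snd R S m'] := by
      rw [List.take_append, List.take_of_length_le hn.le]
      have h1 : n - u.length = 1 := by omega
      rw [h1]; rfl
    rw [heq]
    have hu := h u (u.prefix_append _) X Y
    have hRe : recvs [Ev.snd R S m'] X Y = [] := by simp [recvs]
    rw [recvs_append, sends_append, hRe, List.append_nil]
    exact hu.trans (List.prefix_append _ _)
  · -- n ≥ u.length + 2 : w = u ++ e2 :: e1 :: t
    set t := v.take (n - u.length - 2) with ht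
    have hw2 : (u ++ Ev.snd R S m' :: Ev.snd P Q m :: v).take n
        = u ++ Ev.snd R S m' :: Ev.snd P Q m :: t := by
      rw [List.take_append, List.take_of_length_le hn.le]
      have h2 : n - u.length = (n - u.length - 2) + 2 := by omega
      rw [h2, ht]
      rfl
    rw [hw2]
    have hpref : u ++ Ev.snd P Q m :: Ev.snd R S m' :: t
        <+: u ++ Ev.snd P Q m :: Ev.snd R S m' :: v := by
      refine ⟨v.drop (n - u.length - 2), ?_⟩
      simp [ht]
    have horig := h (u ++ Ev.snd P Q m :: Ev.snd R S m' :: t) hpref X Y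
    have hr : recvs (u ++ Ev.snd R S m' :: Ev.snd P Q m :: t) X Y
        = recvs (u ++ Ev.snd P Q m :: Ev.snd R S m' :: t) X Y := by
      simp [recvs_append, recvs_snd_cons]
    have hs : sends (u ++ Ev.snd R S m' :: Ev.snd P Q m :: t) X Y
        = sends (u ++ Ev.snd P Q m :: Ev.snd R S m' :: t) X Y := by
      simp only [sends_append, sends_snd_cons, ← List.append_assoc]
      by_cases hP : P = X ∧ Q = Y
      · have : ¬ (R = X ∧ S = Y) := by rintro ⟨rfl, -⟩; exact hPR (hP.1)
        simp [hP, this]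
      · simp [hP]
    rw [hr, hs]
    exact horig
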